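/- Let 𝒜 ⊆ P(ℕ) be an almost disjoint family. Then Ψ(𝒜) is strongly star-Menger if and only if |𝒜| < 𝔡. -/
import Mathlib


open Set Filter

universe u

/-- Least cardinality of a cofinal subset of a preorder. -/
noncomputable def poCof (α : Type u) [Preorder α] : Cardinal.{u} :=
  sInf { c | ∃ S : Set α, (∀ a : α, ∃ b ∈ S, a ≤ b) ∧ Cardinal.mk S = c }

/-- `cof([X]^ℵ₀)`: cofinality of the family of countably infinite subsets of `X`,
ordered by inclusion. -/
noncomputable def ctblCof (X : Type u) : Cardinal.{u} :=
  poCof { A : Set X // A.Countable ∧ A.Infinite }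

/-- The dominating number 𝔡. -/
noncomputable def dNum : Cardinal :=
  sInf { c | ∃ D : Set (ℕ → ℕ),
    (∀ f : ℕ → ℕ, ∃ g ∈ D, ∀ᶠ n in atTop, f n ≤ g n) ∧ Cardinal.mk D = c }

/-- The unbounding number 𝔟. -/
noncomputable def bNum : Cardinal :=
  sInf { c | ∃ B : Set (ℕ → ℕ),
    (∀ g : ℕ → ℕ, ∃ f ∈ B, ¬ ∀ᶠ n in atTop, f n ≤ g n) ∧ Cardinal.mk B = c }

/-- An almost disjoint family on ℕ. -/
def AlmostDisjoint (𝒜 : Set (Set ℕ)) : Prop :=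
  (∀ A ∈ 𝒜, A.Infinite) ∧ ∀ A ∈ 𝒜, ∀ B ∈ 𝒜, A ≠ B → (A ∩ B).Finite

/-- The underlying set of the Isbell–Mrówka space `Ψ(𝒜) = ℕ ∪ 𝒜`. -/
abbrev PsiSpace (𝒜 : Set (Set ℕ)) : Type := ℕ ⊕ ↥𝒜

/-- The Isbell–Mrówka topology: naturals are isolated, and basic neighborhoods
of `A ∈ 𝒜` are `{A} ∪ (A \ F)` for finite `F`. -/
instance psiTop (𝒜 : Set (Set ℕ)) : TopologicalSpace (PsiSpace 𝒜) where
  IsOpen U := ∀ A : 𝒜, Sum.inr A ∈ U → { n : ℕ | n ∈ (A : Set ℕ) ∧ Sum.inl n ∉ U }.Finite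
  isOpen_univ := by
    intro A _
    convert Set.finite_empty using 1
    ext n; simp
  isOpen_inter := by
    intro U V hU hV A hA
    apply ((hU A hA.1).union (hV A hA.2)).subset
    rintro n ⟨h1, h2⟩
    by_cases h : Sum.inl n ∈ U
    · exact Or.inr ⟨h1, fun hv => h2 ⟨h, hv⟩⟩
    · exact Or.inl ⟨h1, h⟩
  isOpen_sUnion := by
    intro s hs A hA
    obtain ⟨t, ht, hAt⟩ := hA
    apply (hs t ht A hAt).subset
    rintro n ⟨h1, h2⟩
    exact ⟨h1, fun h => h2 ⟨t, ht, h⟩⟩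

/-- `st(S, 𝒰) = ⋃ {U ∈ 𝒰 : U ∩ S ≠ ∅}`. -/
def starSet {X : Type*} (S : Set X) (𝒰 : Set (Set X)) : Set X :=
  ⋃₀ { U ∈ 𝒰 | (U ∩ S).Nonempty }

def StarMenger (X : Type*) [TopologicalSpace X] : Prop :=
  ∀ 𝒰 : ℕ → Set (Set X), (∀ n, ∀ U ∈ 𝒰 n, IsOpen U) → (∀ n, ⋃₀ 𝒰 n = univ) →
    ∃ ℱ : ℕ → Set (Set X), (∀ n, ℱ n ⊆ 𝒰 n ∧ (ℱ n).Finite) ∧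
      (⋃ n, starSet (⋃₀ ℱ n) (𝒰 n)) = univ

def StarHurewicz (X : Type*) [TopologicalSpace X] : Prop :=
  ∀ 𝒰 : ℕ → Set (Set X), (∀ n, ∀ U ∈ 𝒰 n, IsOpen U) → (∀ n, ⋃₀ 𝒰 n = univ) →
    ∃ ℱ : ℕ → Set (Set X), (∀ n, ℱ n ⊆ 𝒰 n ∧ (ℱ n).Finite) ∧
      ∀ x : X, ∀ᶠ n in atTop, x ∈ starSet (⋃₀ ℱ n) (𝒰 n)

def StarRothberger (X : Type*) [TopologicalSpace X] : Prop :=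
  ∀ 𝒰 : ℕ → Set (Set X), (∀ n, ∀ U ∈ 𝒰 n, IsOpen U) → (∀ n, ⋃₀ 𝒰 n = univ) →
    ∃ U : ℕ → Set X, (∀ n, U n ∈ 𝒰 n) ∧ (⋃ n, starSet (U n) (𝒰 n)) = univ

def StronglyStarMenger (X : Type*) [TopologicalSpace X] : Prop :=
  ∀ 𝒰 : ℕ → Set (Set X), (∀ n, ∀ U ∈ 𝒰 n, IsOpen U) → (∀ n, ⋃₀ 𝒰 n = univ) →
    ∃ F : ℕ → Set X, (∀ n, (F n).Finite) ∧ (⋃ n, starSet (F n) (𝒰 n)) = univ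

def StronglyStarHurewicz (X : Type*) [TopologicalSpace X] : Prop :=
  ∀ 𝒰 : ℕ → Set (Set X), (∀ n, ∀ U ∈ 𝒰 n, IsOpen U) → (∀ n, ⋃₀ 𝒰 n = univ) →
    ∃ F : ℕ → Set X, (∀ n, (F n).Finite) ∧
      ∀ x : X, ∀ᶠ n in atTop, x ∈ starSet (F n) (𝒰 n)


lemma psi_isOpen_iff (𝒜 : Set (Set ℕ)) (U : Set (PsiSpace 𝒜)) :
    IsOpen U ↔ ∀ A : 𝒜, Sum.inr A ∈ U → { n : ℕ | n ∈ (A : Set ℕ) ∧ Sum.inl n ∉ U }.Finite :=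
  Iff.rfl

lemma psi_ssm_of_lt (𝒜 : Set (Set ℕ)) (had : AlmostDisjoint 𝒜)
    (hlt : Cardinal.mk ↥𝒜 < dNum) : StronglyStarMenger (PsiSpace 𝒜) := by
  intro 𝒰 hopen hcov
  have hU : ∀ (A : ↥𝒜) (n : ℕ), ∃ U, U ∈ 𝒰 n ∧ Sum.inr A ∈ U := by
    intro A n
    have : (Sum.inr A : PsiSpace 𝒜) ∈ ⋃₀ 𝒰 n := (hcov n) ▸ mem_univ _
    simpa [Set.mem_sUnion] using this
  choose U hU1 hU2 using hU
  have hp : ∀ (A : ↥𝒜) (n : ℕ), ∃ k, k ∈ (A : Set ℕ) ∧ Sum.inl k ∈ U A n := by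
    intro A n
    have hfin : {k : ℕ | k ∈ (A : Set ℕ) ∧ Sum.inl k ∉ U A n}.Finite :=
      (psi_isOpen_iff 𝒜 _).mp (hopen n _ (hU1 A n)) A (hU2 A n)
    have hinf : ((A : Set ℕ) \ {k : ℕ | k ∈ (A : Set ℕ) ∧ Sum.inl k ∉ U A n}).Infinite :=
      (had.1 A.1 A.2).diff hfin
    obtain ⟨k, hk⟩ := hinf.nonempty
    exact ⟨k, hk.1, by by_contra h; exact hk.2 ⟨hk.1, h⟩⟩
  choose p hp1 hp2 using hp
  have hnd : ∃ g : ℕ → ℕ, ∀ A : ↥𝒜, ¬ ∀ᶠ n in atTop, g n ≤ p A n := by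
    by_contra h
    push_neg at h
    have hmem : Cardinal.mk ↥(Set.range p) ∈ { c | ∃ D : Set (ℕ → ℕ),
        (∀ f : ℕ → ℕ, ∃ g ∈ D, ∀ᶠ n in atTop, f n ≤ g n) ∧ Cardinal.mk D = c } := by
      refine ⟨Set.range p, fun f => ?_, rfl⟩
      obtain ⟨A, hA⟩ := h f
      exact ⟨p A, ⟨A, rfl⟩, hA⟩
    have h1 : dNum ≤ Cardinal.mk ↥(Set.range p) := csInf_le' hmem
    exact absurd (h1.trans Cardinal.mk_range_le) (not_le.mpr hlt)
  obtain ⟨g, hg⟩ := hnd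
  refine ⟨fun n => Sum.inl '' (Set.Iic (max (g n) n)), fun n => (Set.finite_Iic _).image _, ?_⟩
  ext x
  simp only [Set.mem_iUnion, Set.mem_univ, iff_true]
  cases x with
  | inl m =>
    have : (Sum.inl m : PsiSpace 𝒜) ∈ ⋃₀ 𝒰 m := (hcov m) ▸ mem_univ _
    obtain ⟨V, hV, hmV⟩ := this
    exact ⟨m, V, ⟨hV, ⟨Sum.inl m, hmV, ⟨m, Set.mem_Iic.mpr (le_max_right _ _), rfl⟩⟩⟩, hmV⟩
  | inr A =>
    have := hg A
    rw [Filter.not_eventually] at this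
    obtain ⟨n, hn⟩ := this.exists
    push_neg at hn
    exact ⟨n, U A n, ⟨hU1 A n, ⟨Sum.inl (p A n), hp2 A n,
      ⟨p A n, Set.mem_Iic.mpr (le_max_of_le_left hn.le), rfl⟩⟩⟩, hU2 A n⟩

lemma psi_lt_of_ssm (𝒜 : Set (Set ℕ)) (had : AlmostDisjoint 𝒜)
    (hssm : StronglyStarMenger (PsiSpace 𝒜)) : Cardinal.mk ↥𝒜 < dNum := by
  classical
  by_contra hle
  push_neg at hle
  -- obtain a dominating family of minimal cardinality
  have hne : { c | ∃ D : Set (ℕ → ℕ),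
      (∀ f : ℕ → ℕ, ∃ g ∈ D, ∀ᶠ n in atTop, f n ≤ g n) ∧ Cardinal.mk D = c }.Nonempty :=
    ⟨_, Set.univ, fun f => ⟨f, Set.mem_univ f, Filter.Eventually.of_forall fun n => le_rfl⟩, rfl⟩
  obtain ⟨D, hDdom, hDcard⟩ := csInf_mem hne
  have hDinf : D.Infinite := by
    by_contra hni
    rw [Set.not_infinite] at hni
    have hfin := hni
    obtain ⟨d, hdD, hdev⟩ := hDdom (fun n => hfin.toFinset.sup (fun d => d n) + 1)
    obtain ⟨n, hn⟩ := hdev.exists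
    have : d n ≤ hfin.toFinset.sup (fun d => d n) :=
      Finset.le_sup (f := fun d => d n) (hfin.mem_toFinset.mpr hdD)
    have hn' : hfin.toFinset.sup (fun d => d n) + 1 ≤ d n := hn
    exact Nat.not_succ_le_self _ (hn'.trans this)
  have haleph : Cardinal.aleph0 ≤ Cardinal.mk ↥D := by
    rw [← Cardinal.infinite_iff]
    exact hDinf.to_subtype
  set φ : ↥D × ℕ → (ℕ → ℕ) := fun p => fun n => (p.1 : ℕ → ℕ) n + p.2 with hφdef
  have hcard : Cardinal.mk ↥(Set.range φ) ≤ Cardinal.mk ↥𝒜 := by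
    calc Cardinal.mk ↥(Set.range φ) ≤ Cardinal.mk (↥D × ℕ) := Cardinal.mk_range_le
    _ = Cardinal.mk ↥D * Cardinal.aleph0 := by simp
    _ = Cardinal.mk ↥D := by
        rw [Cardinal.mul_eq_max haleph le_rfl, max_eq_left haleph]
    _ = dNum := hDcard
    _ ≤ Cardinal.mk ↥𝒜 := hle
  obtain ⟨e⟩ := (Cardinal.le_def _ _).mp hcard
  set h : ↥𝒜 → (ℕ → ℕ) := fun A =>
    if hx : ∃ x : ↥(Set.range φ), e x = A then ((Classical.choose hx : ↥(Set.range φ)) : ℕ → ℕ)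
    else fun _ => 0 with hhdef
  have hhe : ∀ x : ↥(Set.range φ), h (e x) = (x : ℕ → ℕ) := by
    intro x
    have hx : ∃ y : ↥(Set.range φ), e y = e x := ⟨x, rfl⟩
    have h1 : h (e x) = ((Classical.choose hx : ↥(Set.range φ)) : ℕ → ℕ) := dif_pos hx
    rw [h1, e.injective (Classical.choose_spec hx)]
  -- choose points of A above h A n
  have hq : ∀ (A : ↥𝒜) (n : ℕ), ∃ k ∈ (A : Set ℕ), h A n < k :=
    fun A n => (had.1 A.1 A.2).exists_gt _
  choose q hq1 hq2 using hq
  -- the covers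
  set V : ↥𝒜 → ℕ → Set (PsiSpace 𝒜) := fun A n =>
    insert (Sum.inr A) (Sum.inl '' {k | k ∈ (A : Set ℕ) ∧ h A n < k}) with hVdef
  set 𝒰 : ℕ → Set (Set (PsiSpace 𝒜)) := fun n =>
    {U | (∃ k : ℕ, U = {Sum.inl k}) ∨ ∃ A : ↥𝒜, U = V A n} with h𝒰def
  have hopen : ∀ n, ∀ U ∈ 𝒰 n, IsOpen U := by
    intro n U hU
    rw [psi_isOpen_iff]
    intro B hB
    rcases hU with ⟨k, rfl⟩ | ⟨A, rfl⟩
    · simp at hB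
    · have hBA : B = A := by
        rcases hB with hb | ⟨k, _, hk⟩
        · exact Sum.inr_injective hb
        · exact absurd hk (by simp)
      subst hBA
      apply (Set.finite_Iic (h B n)).subset
      rintro k ⟨hk1, hk2⟩
      by_contra hk3
      simp only [Set.mem_Iic, not_le] at hk3
      exact hk2 (Set.mem_insert_iff.mpr (Or.inr ⟨k, ⟨hk1, hk3⟩, rfl⟩))
  have hcov : ∀ n, ⋃₀ 𝒰 n = univ := by
    intro n
    ext x
    simp only [Set.mem_univ, iff_true]
    cases x with
    | inl k => exact ⟨{Sum.inl k}, Or.inl ⟨k, rfl⟩, rfl⟩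
    | inr A => exact ⟨V A n, Or.inr ⟨A, rfl⟩, Set.mem_insert _ _⟩
  obtain ⟨F, hFfin, hFcov⟩ := hssm 𝒰 hopen hcov
  -- the function f bounding the traces of F
  set rk : ℕ → PsiSpace 𝒜 → ℕ := fun n x => Sum.elim id (fun A => q A n) x with hrkdef
  set f : ℕ → ℕ := fun n => sSup (rk n '' F n) with hfdef
  have hfle : ∀ n, ∀ x ∈ F n, rk n x ≤ f n := fun n x hx =>
    le_csSup ((hFfin n).image _).bddAbove ⟨x, hx, rfl⟩
  -- find A = e x with h A everywhere above f
  obtain ⟨d, hdD, hdev⟩ := hDdom (fun n => f n + 1)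
  obtain ⟨N, hN⟩ := Filter.eventually_atTop.mp hdev
  set m : ℕ := (Finset.range N).sup (fun n => f n + 1) with hmdef
  have hxmem : (fun n => d n + m) ∈ Set.range φ := ⟨(⟨d, hdD⟩, m), rfl⟩
  set x : ↥(Set.range φ) := ⟨_, hxmem⟩ with hxdef
  set A : ↥𝒜 := e x with hAdef
  have hdom : ∀ n, f n < h A n := by
    intro n
    rw [hAdef, hhe x]
    show f n < d n + m
    rcases lt_or_ge n N with hn | hn
    · have : f n + 1 ≤ m := by
        rw [hmdef]; exact Finset.le_sup (f := fun n => f n + 1) (Finset.mem_range.mpr hn)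
      omega
    · have := hN n hn; omega
  -- contradiction
  have hmem : (Sum.inr A : PsiSpace 𝒜) ∈ ⋃ n, starSet (F n) (𝒰 n) := hFcov ▸ mem_univ _
  obtain ⟨n, hn⟩ := Set.mem_iUnion.mp hmem
  simp only [starSet, Set.mem_sUnion, Set.mem_sep_iff] at hn
  obtain ⟨U, ⟨hU𝒰, hUne⟩, hAU⟩ := hn
  rcases hU𝒰 with ⟨k, rfl⟩ | ⟨A', rfl⟩
  · simp at hAU
  · have hAA' : A' = A := by
      rcases hAU with hb | ⟨k, _, hk⟩
      · exact (Sum.inr_injective hb).symm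
      · exact absurd hk (by simp)
    subst hAA'
    obtain ⟨y, hyV, hyF⟩ := hUne
    have hrk : h A n < rk n y := by
      rcases hyV with rfl | ⟨k, hk, rfl⟩
      · exact hq2 A n
      · exact hk.2
    have h1 := hfle n y hyF
    have h2 := hdom n
    omega

/-- Bonanzinga–Matveev: `Ψ(𝒜)` is strongly star-Menger iff `|𝒜| < 𝔡`. -/
theorem stronglyStarMenger_psiSpace_iff (𝒜 : Set (Set ℕ)) (had : AlmostDisjoint 𝒜) :
    StronglyStarMenger (PsiSpace 𝒜) ↔ Cardinal.mk ↥𝒜 < dNum := by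
  exact ⟨psi_lt_of_ssm 𝒜 had, psi_ssm_of_lt 𝒜 had⟩
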